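/- Let n ∈ ℕ and let u, v : ℝ → Mₙ(ℝ) be continuous. Suppose γ, σ : ℝ → Mₙ(ℝ) satisfy: γ(0) = 1, σ(0) = 0, γ(t) is invertible for every t ∈ ℝ, and for every t ∈ ℝ one has HasDerivAt γ (γ(t)*u(t)) t and HasDerivAt σ (γ(t)*v(t) + σ(t)*u(t)) t. Then for every t ∈ ℝ, σ(t) = (∫_0^t γ(s)*v(s)*(γ(s))⁻¹ ds) * γ(t). -/

import Mathlib

attribute [local instance] Matrix.normedAddCommGroup Matrix.normedSpace

open MeasureTheory intervalIntegral

private lemma sard_aux_mul {n : ℕ} {A B : ℝ → Matrix (Fin n) (Fin n) ℝ}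
    {A' B' : Matrix (Fin n) (Fin n) ℝ} {t : ℝ}
    (hA : HasDerivAt A A' t) (hB : HasDerivAt B B' t) :
    HasDerivAt (fun s => A s * B s) (A' * B t + A t * B') t := by
  apply hasDerivAt_pi.2; intro i
  apply hasDerivAt_pi.2; intro j
  have : ∀ s, (A s * B s) i j = ∑ k, A s i k * B s k j := fun s => Matrix.mul_apply
  simp only [this]
  have hAij : ∀ k, HasDerivAt (fun s => A s i k) (A' i k) t := fun k =>
    hasDerivAt_pi.1 (hasDerivAt_pi.1 hA i) k
  have hBij : ∀ k, HasDerivAt (fun s => B s k j) (B' k j) t := fun k =>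
    hasDerivAt_pi.1 (hasDerivAt_pi.1 hB k) j
  have := HasDerivAt.fun_sum (u := Finset.univ)
    (A := fun k s => A s i k * B s k j)
    (A' := fun k => A' i k * B t k j + A t i k * B' k j)
    (fun k _ => (hAij k).mul (hBij k))
  convert this using 1
  simp [Matrix.add_apply, Matrix.mul_apply, Finset.sum_add_distrib]

private lemma sard_aux_inv_cont {n : ℕ} {γ : ℝ → Matrix (Fin n) (Fin n) ℝ}
    (hγinv : ∀ s, IsUnit (γ s)) (hγc : Continuous γ) :
    Continuous (fun s => (γ s)⁻¹) := by
  rw [continuous_iff_continuousAt]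
  intro s
  refine (continuousAt_matrix_inv _ ?_).comp hγc.continuousAt
  rw [Ring.inverse_eq_inv']
  exact continuousAt_inv₀ ((Matrix.isUnit_iff_isUnit_det _).1 (hγinv s)).ne_zero

private lemma sard_aux_inv_deriv {n : ℕ} {γ : ℝ → Matrix (Fin n) (Fin n) ℝ}
    {d : Matrix (Fin n) (Fin n) ℝ} {t : ℝ}
    (hγinv : ∀ s, IsUnit (γ s)) (hγc : Continuous γ) (h : HasDerivAt γ d t) :
    HasDerivAt (fun s => (γ s)⁻¹) ((γ t)⁻¹ * (-d) * (γ t)⁻¹) t := by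
  have hdet : ∀ s, IsUnit (γ s).det := fun s => (Matrix.isUnit_iff_isUnit_det _).1 (hγinv s)
  have hgc := sard_aux_inv_cont hγinv hγc
  refine hasDerivAt_iff_tendsto_slope.2 ?_
  have key : ∀ s : ℝ, slope (fun s => (γ s)⁻¹) t s = (γ s)⁻¹ * (-(slope γ t s)) * (γ t)⁻¹ := by
    intro s
    have hid : (γ s)⁻¹ - (γ t)⁻¹ = (γ s)⁻¹ * (γ t - γ s) * (γ t)⁻¹ := by
      rw [Matrix.mul_sub, Matrix.sub_mul, Matrix.mul_assoc,
        Matrix.mul_nonsing_inv _ (hdet t), Matrix.nonsing_inv_mul _ (hdet s),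
        Matrix.mul_one, Matrix.one_mul]
    simp only [slope, vsub_eq_sub, hid]
    rw [← smul_neg, neg_sub, mul_smul_comm, smul_mul_assoc]
  refine Filter.Tendsto.congr (fun s => (key s).symm) ?_
  have h1 : Filter.Tendsto (fun s => (γ s)⁻¹) (nhdsWithin t {t}ᶜ) (nhds ((γ t)⁻¹)) :=
    (hgc.continuousAt.tendsto).mono_left nhdsWithin_le_nhds
  have h2 : Filter.Tendsto (fun s => -(slope γ t s)) (nhdsWithin t {t}ᶜ) (nhds (-d)) :=
    (hasDerivAt_iff_tendsto_slope.1 h).neg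
  exact (h1.mul h2).mul tendsto_const_nhds

/-- The key matrix-coordinate computation in the proof of the formula for the differential of
the endpoint map: the variation `σ` of the solution of `γ' = γ·u` equals
`(∫₀ᵗ γ(s)·v(s)·γ(s)⁻¹ ds) · γ(t)`. -/
theorem sard_endpoint_variation (n : ℕ) (u v γ σ : ℝ → Matrix (Fin n) (Fin n) ℝ)
    (hu : Continuous u) (hv : Continuous v)
    (hγ0 : γ 0 = 1) (hσ0 : σ 0 = 0)
    (hγinv : ∀ t : ℝ, IsUnit (γ t))
    (hγ' : ∀ t : ℝ, HasDerivAt γ (γ t * u t) t)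
    (hσ' : ∀ t : ℝ, HasDerivAt σ (γ t * v t + σ t * u t) t) :
    ∀ t : ℝ, σ t = (∫ s in (0:ℝ)..t, γ s * v s * (γ s)⁻¹) * γ t := by
  intro t
  have hdet : ∀ s, IsUnit (γ s).det := fun s => (Matrix.isUnit_iff_isUnit_det _).1 (hγinv s)
  have hγc : Continuous γ := by
    rw [continuous_iff_continuousAt]; exact fun s => (hγ' s).continuousAt
  set g : ℝ → Matrix (Fin n) (Fin n) ℝ := fun s => (γ s)⁻¹ with hg
  have hgc : Continuous g := sard_aux_inv_cont hγinv hγc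
  have hg' : ∀ s, HasDerivAt g (-(u s * g s)) s := by
    intro s
    have := sard_aux_inv_deriv hγinv hγc (hγ' s)
    convert this using 1
    rw [mul_neg, neg_mul, neg_inj, ← Matrix.mul_assoc, Matrix.nonsing_inv_mul _ (hdet s), Matrix.one_mul]
  have hδ' : ∀ s, HasDerivAt (fun r => σ r * g r) (γ s * v s * g s) s := by
    intro s
    have := sard_aux_mul (hσ' s) (hg' s)
    convert this using 1
    rw [Matrix.add_mul, Matrix.mul_neg, Matrix.mul_assoc (σ s), add_neg_cancel_right]
  have hInt : ∫ s in (0:ℝ)..t, γ s * v s * g s = σ t * g t - σ 0 * g 0 :=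
    intervalIntegral.integral_eq_sub_of_hasDerivAt (fun s _ => hδ' s)
      (((hγc.matrix_mul hv).matrix_mul hgc).intervalIntegrable _ _)
  rw [hσ0, Matrix.zero_mul, sub_zero] at hInt
  rw [hInt, Matrix.mul_assoc, hg, Matrix.nonsing_inv_mul _ (hdet t), Matrix.mul_one]
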